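/- arXiv:2001.00652 — 2 statements merged into one kernel-verified Lean document; each statement's English description precedes it below -/
import Mathlib

section
/- Fernández–Procacci bound on the one-polymer free energy difference at negative real activities: if μ, p : P → ℝ≥0 satisfy p_x · Z_{Γ*(x)}(μ) ≤ μ_x for all x ∈ P, then for every Λ ⊆ P and every x ∈ Λ, log Z_{Λ\{x}}(−p) − log Z_Λ(−p) ≤ log(1 + μ_x) (both partition functions being positive under these hypotheses). -/
open Finset

def indepSet {P : Type*} [DecidableEq P] (W : P → P → ℕ) (S : Finset P) : Prop :=
  ∀ x ∈ S, ∀ y ∈ S, x ≠ y → W x y = 1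

instance {P : Type*} [DecidableEq P] (W : P → P → ℕ) : DecidablePred (indepSet W) :=
  fun _ => by unfold indepSet; infer_instance

/-- Polymer partition function `Z_Λ(a) = Σ_{S ⊆ Λ independent} Π_{y ∈ S} a y`. -/
def Zpart {P : Type*} [DecidableEq P] {R : Type*} [CommRing R] (W : P → P → ℕ)
    (Λ : Finset P) (a : P → R) : R :=
  ∑ S ∈ Λ.powerset.filter (indepSet W), ∏ y ∈ S, a y

/-- `Γ*(x)`: the set of polymers incompatible with `x`. -/
def Γstar {P : Type*} [Fintype P] [DecidableEq P] (W : P → P → ℕ) (x : P) : Finset P :=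
  Finset.univ.filter fun y => W x y = 0

section FPaux

variable {P : Type*} [Fintype P] [DecidableEq P] (W : P → P → ℕ)

lemma mem_Gstar {x y : P} : y ∈ Γstar W x ↔ W x y = 0 := by
  simp [Γstar]

lemma indepSet_empty : indepSet W (∅ : Finset P) := by
  intro x hx; simp at hx

lemma indepSet_subset {S T : Finset P} (h : indepSet W T) (hST : S ⊆ T) : indepSet W S :=
  fun x hx y hy hxy => h x (hST hx) y (hST hy) hxy

lemma Zpart_empty (a : P → ℝ) : Zpart W ∅ a = 1 := by
  unfold Zpart
  rw [Finset.powerset_empty, Finset.filter_singleton, if_pos (indepSet_empty W)]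
  simp

lemma Zpart_nonneg (μ : P → ℝ) (hμ : ∀ x, 0 ≤ μ x) (A : Finset P) : 0 ≤ Zpart W A μ :=
  Finset.sum_nonneg fun S _ => Finset.prod_nonneg fun y _ => hμ y

lemma one_le_Zpart (μ : P → ℝ) (hμ : ∀ x, 0 ≤ μ x) (A : Finset P) : 1 ≤ Zpart W A μ := by
  have hempty : (∅ : Finset P) ∈ A.powerset.filter (indepSet W) :=
    Finset.mem_filter.mpr ⟨Finset.empty_mem_powerset A, indepSet_empty W⟩
  have h := Finset.single_le_sum (f := fun S : Finset P => ∏ y ∈ S, μ y)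
    (fun S _ => Finset.prod_nonneg fun y _ => hμ y) hempty
  simp only [Finset.prod_empty] at h
  exact h

lemma Zpart_pos (μ : P → ℝ) (hμ : ∀ x, 0 ≤ μ x) (A : Finset P) : 0 < Zpart W A μ :=
  lt_of_lt_of_le one_pos (one_le_Zpart W μ hμ A)

lemma Zpart_mono (μ : P → ℝ) (hμ : ∀ x, 0 ≤ μ x) {A B : Finset P} (h : A ⊆ B) :
    Zpart W A μ ≤ Zpart W B μ :=
  Finset.sum_le_sum_of_subset_of_nonneg
    (Finset.filter_subset_filter _ (Finset.powerset_mono.2 h))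
    (fun S _ _ => Finset.prod_nonneg fun y _ => hμ y)

lemma Zpart_submul (μ : P → ℝ) (hμ : ∀ x, 0 ≤ μ x) {A B : Finset P} (hAB : Disjoint A B) :
    Zpart W (A ∪ B) μ ≤ Zpart W A μ * Zpart W B μ := by
  classical
  have hinj : ∀ U1 ∈ (A ∪ B).powerset.filter (indepSet W),
      ∀ U2 ∈ (A ∪ B).powerset.filter (indepSet W),
      (fun U => (U ∩ A, U ∩ B)) U1 = (fun U => (U ∩ A, U ∩ B)) U2 → U1 = U2 := by
    intro U1 h1 U2 h2 heq
    simp only [Finset.mem_filter, Finset.mem_powerset] at h1 h2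
    have e1 : (U1 ∩ A) ∪ (U1 ∩ B) = U1 := by
      rw [← Finset.inter_union_distrib_left]; exact Finset.inter_eq_left.mpr h1.1
    have e2 : (U2 ∩ A) ∪ (U2 ∩ B) = U2 := by
      rw [← Finset.inter_union_distrib_left]; exact Finset.inter_eq_left.mpr h2.1
    have hf := congrArg Prod.fst heq
    have hs := congrArg Prod.snd heq
    simp only at hf hs
    rw [← e1, ← e2, hf, hs]
  have hrw : Zpart W (A ∪ B) μ
      = ∑ pr ∈ ((A ∪ B).powerset.filter (indepSet W)).image
          (fun U => (U ∩ A, U ∩ B)), (∏ y ∈ pr.1, μ y) * (∏ y ∈ pr.2, μ y) := by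
    rw [Zpart, Finset.sum_image hinj]
    refine Finset.sum_congr rfl fun U hU => ?_
    simp only [Finset.mem_filter, Finset.mem_powerset] at hU
    have hUeq : (U ∩ A) ∪ (U ∩ B) = U := by
      rw [← Finset.inter_union_distrib_left]
      exact Finset.inter_eq_left.mpr hU.1
    have hdisj : Disjoint (U ∩ A) (U ∩ B) :=
      hAB.mono Finset.inter_subset_right Finset.inter_subset_right
    rw [← Finset.prod_union hdisj, hUeq]
  rw [hrw, Zpart, Zpart, Finset.sum_mul_sum]
  rw [← Finset.sum_product']
  apply Finset.sum_le_sum_of_subset_of_nonneg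
  · intro pr hpr
    simp only [Finset.mem_image, Finset.mem_filter, Finset.mem_powerset] at hpr
    obtain ⟨U, ⟨hUsub, hUind⟩, rfl⟩ := hpr
    simp only [Finset.mem_product, Finset.mem_filter, Finset.mem_powerset]
    exact ⟨⟨Finset.inter_subset_right, indepSet_subset W hUind Finset.inter_subset_left⟩,
      ⟨Finset.inter_subset_right, indepSet_subset W hUind Finset.inter_subset_left⟩⟩
  · intro pr _ _
    exact mul_nonneg (Finset.prod_nonneg fun y _ => hμ y) (Finset.prod_nonneg fun y _ => hμ y)

lemma Zpart_delete (hsym : ∀ x y, W x y = W y x) (hdiag : ∀ x, W x x = 0)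
    (h01 : ∀ x y, W x y = 0 ∨ W x y = 1) (a : P → ℝ) {V : Finset P} {z : P} (hz : z ∈ V) :
    Zpart W V a = Zpart W (V.erase z) a + a z * Zpart W (V \ Γstar W z) a := by
  classical
  have hz' : z ∉ V.erase z := Finset.notMem_erase z V
  have hzG : z ∈ Γstar W z := (mem_Gstar W).mpr (hdiag z)
  have hzT : ∀ T ∈ (V \ Γstar W z).powerset.filter (indepSet W), z ∉ T := by
    intro T hT hzmem
    simp only [Finset.mem_filter, Finset.mem_powerset] at hT
    exact (Finset.mem_sdiff.mp (hT.1 hzmem)).2 hzG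
  have key : ((V.erase z).powerset.image (insert z)).filter (indepSet W)
      = ((V \ Γstar W z).powerset.filter (indepSet W)).image (insert z) := by
    ext S
    simp only [Finset.mem_filter, Finset.mem_image, Finset.mem_powerset]
    constructor
    · rintro ⟨⟨T, hT, rfl⟩, hind⟩
      have hzTT : z ∉ T := fun h => hz' (hT h)
      refine ⟨T, ⟨?_, indepSet_subset W hind (Finset.subset_insert z T)⟩, rfl⟩
      intro t ht
      have htV : t ∈ V := (Finset.erase_subset _ _) (hT ht)
      have htz : t ≠ z := fun h => hzTT (h ▸ ht)
      have hWzt : W z t = 1 := hind z (Finset.mem_insert_self _ _) t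
        (Finset.mem_insert_of_mem ht) (Ne.symm htz)
      refine Finset.mem_sdiff.mpr ⟨htV, fun hmem => ?_⟩
      rw [mem_Gstar W] at hmem
      omega
    · rintro ⟨T, ⟨hTsub, hTind⟩, rfl⟩
      have hzTT : z ∉ T := fun h => (Finset.mem_sdiff.mp (hTsub h)).2 hzG
      constructor
      · refine ⟨T, fun t ht => Finset.mem_erase.mpr
          ⟨fun h => hzTT (h ▸ ht), (Finset.mem_sdiff.mp (hTsub ht)).1⟩, rfl⟩
      · intro u hu v hv huv
        rcases Finset.mem_insert.mp hu with rfl | huT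
        · rcases Finset.mem_insert.mp hv with rfl | hvT
          · exact absurd rfl huv
          · have hnm : v ∉ Γstar W u := (Finset.mem_sdiff.mp (hTsub hvT)).2
            rw [mem_Gstar W] at hnm
            rcases h01 u v with h0 | h1
            · exact absurd h0 hnm
            · exact h1
        · rcases Finset.mem_insert.mp hv with rfl | hvT
          · have hnm : u ∉ Γstar W v := (Finset.mem_sdiff.mp (hTsub huT)).2
            rw [mem_Gstar W] at hnm
            rw [hsym u v]
            rcases h01 v u with h0 | h1
            · exact absurd h0 hnm
            · exact h1
          · exact hTind u huT v hvT huv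
  have hdisj : Disjoint ((V.erase z).powerset.filter (indepSet W))
      (((V \ Γstar W z).powerset.filter (indepSet W)).image (insert z)) := by
    rw [Finset.disjoint_left]
    intro S hS1 hS2
    simp only [Finset.mem_filter, Finset.mem_powerset] at hS1
    simp only [Finset.mem_image] at hS2
    obtain ⟨T, _, rfl⟩ := hS2
    exact hz' (hS1.1 (Finset.mem_insert_self z T))
  have hinj : ∀ T1 ∈ (V \ Γstar W z).powerset.filter (indepSet W),
      ∀ T2 ∈ (V \ Γstar W z).powerset.filter (indepSet W),
      insert z T1 = insert z T2 → T1 = T2 := by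
    intro T1 h1 T2 h2 heq
    have := congrArg (fun S => Finset.erase S z) heq
    simpa [Finset.erase_insert (hzT T1 h1), Finset.erase_insert (hzT T2 h2)] using this
  calc Zpart W V a
      = ∑ S ∈ (insert z (V.erase z)).powerset.filter (indepSet W), ∏ y ∈ S, a y := by
        rw [Finset.insert_erase hz]; rfl
    _ = ∑ S ∈ ((V.erase z).powerset.filter (indepSet W) ∪
          (((V \ Γstar W z).powerset.filter (indepSet W)).image (insert z))), ∏ y ∈ S, a y := by
        rw [Finset.powerset_insert, Finset.filter_union, key]
    _ = Zpart W (V.erase z) a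
        + ∑ S ∈ ((V \ Γstar W z).powerset.filter (indepSet W)).image (insert z),
            ∏ y ∈ S, a y := by
        rw [Finset.sum_union hdisj]; rfl
    _ = Zpart W (V.erase z) a + a z * Zpart W (V \ Γstar W z) a := by
        congr 1
        rw [Finset.sum_image hinj, Zpart, Finset.mul_sum]
        refine Finset.sum_congr rfl fun T hT => ?_
        rw [Finset.prod_insert (hzT T hT)]

lemma Zpart_insert (hsym : ∀ x y, W x y = W y x) (hdiag : ∀ x, W x x = 0)
    (h01 : ∀ x y, W x y = 0 ∨ W x y = 1) (a : P → ℝ) {D : Finset P} {z : P} (hz : z ∉ D) :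
    Zpart W (insert z D) a = Zpart W D a + a z * Zpart W (D \ Γstar W z) a := by
  have hzG : z ∈ Γstar W z := (mem_Gstar W).mpr (hdiag z)
  have := Zpart_delete W hsym hdiag h01 a (Finset.mem_insert_self z D)
  rwa [Finset.erase_insert hz, Finset.insert_sdiff_of_mem D hzG] at this

end FPaux

section FPmain

variable {P : Type*} [Fintype P] [DecidableEq P] (W : P → P → ℕ) (μ p : P → ℝ)

/-- The inner telescoping lemma: removing a set `M` from the volume `V` costs at most the
ratio of μ-partition functions of the context. -/
lemma fp_T (hsym : ∀ x y, W x y = W y x) (hdiag : ∀ x, W x x = 0)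
    (h01 : ∀ x y, W x y = 0 ∨ W x y = 1)
    (hμ : ∀ x, 0 ≤ μ x)
    (n : ℕ)
    (HH : ∀ V : Finset P, V.card ≤ n →
      0 < Zpart W V (fun t => -p t) ∧
      ∀ y ∈ V, ∀ C : Finset P, Disjoint C V →
        p y * Zpart W (V \ Γstar W y) (fun t => -p t) * Zpart W (insert y C) μ ≤
        μ y * Zpart W (C \ Γstar W y) μ * Zpart W (V.erase y) (fun t => -p t)) :
    ∀ M V D : Finset P, V.card ≤ n → M ⊆ V → Disjoint D V →
      Zpart W D μ * Zpart W (V \ M) (fun t => -p t) ≤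
      Zpart W (D ∪ M) μ * Zpart W V (fun t => -p t) := by
  intro M
  induction M using Finset.strongInduction with
  | _ M ih =>
    intro V D hV hMV hDV
    rcases M.eq_empty_or_nonempty with rfl | ⟨z, hzM⟩
    · simp
    · have hzV : z ∈ V := hMV hzM
      have hzD : z ∉ D := fun h => (Finset.disjoint_left.mp hDV h) hzV
      -- deletion identity for the volume
      have hQV : Zpart W V (fun t => -p t)
          = Zpart W (V.erase z) (fun t => -p t)
            - p z * Zpart W (V \ Γstar W z) (fun t => -p t) := by
        have := Zpart_delete W hsym hdiag h01 (fun t => -p t) hzV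
        linarith [this]
      -- insertion identity for the context
      have hZD : Zpart W (insert z D) μ = Zpart W D μ + μ z * Zpart W (D \ Γstar W z) μ :=
        Zpart_insert W hsym hdiag h01 μ hzD
      -- HYP at (V, z, D)
      have hHyp := (HH V hV).2 z hzV D hDV
      -- (ii'): Zm D * Q (V.erase z) ≤ Zm (insert z D) * Q V
      have hii : Zpart W D μ * Zpart W (V.erase z) (fun t => -p t) ≤
          Zpart W (insert z D) μ * Zpart W V (fun t => -p t) := by
        rw [hQV, hZD]
        rw [hZD] at hHyp
        nlinarith [hHyp]
      -- IH at (M.erase z, V.erase z, insert z D)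
      have hM'V' : M.erase z ⊆ V.erase z := Finset.erase_subset_erase _ hMV
      have hDV' : Disjoint (insert z D) (V.erase z) := by
        rw [Finset.disjoint_insert_left]
        exact ⟨Finset.notMem_erase z V, hDV.mono_right (Finset.erase_subset _ _)⟩
      have hcard' : (V.erase z).card ≤ n :=
        le_trans (Finset.card_le_card (Finset.erase_subset _ _)) hV
      have hi := ih (M.erase z) (Finset.erase_ssubset hzM) (V.erase z) (insert z D)
        hcard' hM'V' hDV'
      have e1 : (V.erase z) \ (M.erase z) = V \ M := by
        ext t
        simp only [Finset.mem_sdiff, Finset.mem_erase]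
        constructor
        · rintro ⟨⟨htz, htV⟩, h2⟩
          exact ⟨htV, fun htM => h2 ⟨htz, htM⟩⟩
        · rintro ⟨htV, htM⟩
          have htz : t ≠ z := fun h => htM (h ▸ hzM)
          exact ⟨⟨htz, htV⟩, fun h => htM h.2⟩
      have e2 : (insert z D) ∪ (M.erase z) = D ∪ M := by
        ext t
        simp only [Finset.mem_union, Finset.mem_insert, Finset.mem_erase]
        constructor
        · rintro ((rfl | htD) | ⟨_, htM⟩)
          · exact Or.inr hzM
          · exact Or.inl htD
          · exact Or.inr htM
        · rintro (htD | htM)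
          · exact Or.inl (Or.inr htD)
          · by_cases htz : t = z
            · exact Or.inl (Or.inl htz)
            · exact Or.inr ⟨htz, htM⟩
      rw [e1, e2] at hi
      -- chain: cancel Zm (insert z D) > 0
      have hpos : 0 < Zpart W (insert z D) μ := Zpart_pos W μ hμ _
      have h1 : 0 ≤ Zpart W D μ := Zpart_nonneg W μ hμ _
      have h3 : 0 ≤ Zpart W (D ∪ M) μ := Zpart_nonneg W μ hμ _
      have hA := mul_le_mul_of_nonneg_left hi h1
      have hB := mul_le_mul_of_nonneg_left hii h3
      have hfin : Zpart W (insert z D) μ *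
          (Zpart W D μ * Zpart W (V \ M) (fun t => -p t)) ≤
          Zpart W (insert z D) μ *
          (Zpart W (D ∪ M) μ * Zpart W V (fun t => -p t)) := by
        nlinarith [hA, hB]
      exact le_of_mul_le_mul_left hfin hpos

/-- Main induction: positivity of the partition function and the contextual FP bound. -/
lemma fp_main (hsym : ∀ x y, W x y = W y x) (hdiag : ∀ x, W x x = 0)
    (h01 : ∀ x y, W x y = 0 ∨ W x y = 1)
    (hμ : ∀ x, 0 ≤ μ x) (hp : ∀ x, 0 ≤ p x)
    (hFP : ∀ x, p x * Zpart W (Γstar W x) μ ≤ μ x) :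
    ∀ n : ℕ, ∀ Λ : Finset P, Λ.card ≤ n →
      0 < Zpart W Λ (fun t => -p t) ∧
      ∀ y ∈ Λ, ∀ C : Finset P, Disjoint C Λ →
        p y * Zpart W (Λ \ Γstar W y) (fun t => -p t) * Zpart W (insert y C) μ ≤
        μ y * Zpart W (C \ Γstar W y) μ * Zpart W (Λ.erase y) (fun t => -p t) := by
  intro n
  induction n with
  | zero =>
    intro Λ hΛ
    have : Λ = ∅ := Finset.card_eq_zero.mp (Nat.le_zero.mp hΛ)
    subst this
    constructor
    · rw [Zpart_empty]; norm_num
    · intro y hy; simp at hy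
  | succ n ihn =>
    intro Λ hΛ
    by_cases hle : Λ.card ≤ n
    · exact ihn Λ hle
    have hcard : Λ.card = n + 1 := le_antisymm hΛ (Nat.lt_of_not_le hle)
    -- the contextual FP bound at size n+1
    have hHYP : ∀ y ∈ Λ, ∀ C : Finset P, Disjoint C Λ →
        p y * Zpart W (Λ \ Γstar W y) (fun t => -p t) * Zpart W (insert y C) μ ≤
        μ y * Zpart W (C \ Γstar W y) μ * Zpart W (Λ.erase y) (fun t => -p t) := by
      intro y hy C hC
      have hyG : y ∈ Γstar W y := (mem_Gstar W).mpr (hdiag y)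
      have hcard' : (Λ.erase y).card ≤ n := by
        rw [Finset.card_erase_of_mem hy, hcard]; omega
      set V := Λ.erase y with hVdef
      set M := Γstar W y ∩ V with hMdef
      have hMV : M ⊆ V := Finset.inter_subset_right
      have hDdisj : Disjoint (insert y C) V := by
        rw [Finset.disjoint_insert_left]
        exact ⟨Finset.notMem_erase y Λ, hC.mono_right (Finset.erase_subset _ _)⟩
      have hT := fp_T W μ p hsym hdiag h01 hμ n ihn M V (insert y C) hcard' hMV hDdisj
      have e3 : V \ M = Λ \ Γstar W y := by
        ext t
        simp only [hMdef, hVdef, Finset.mem_sdiff, Finset.mem_erase, Finset.mem_inter]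
        constructor
        · rintro ⟨⟨htz, htΛ⟩, h2⟩
          exact ⟨htΛ, fun htG => h2 ⟨htG, htz, htΛ⟩⟩
        · rintro ⟨htΛ, htG⟩
          have htz : t ≠ y := fun h => htG (h ▸ hyG)
          exact ⟨⟨htz, htΛ⟩, fun h => htG h.1⟩
      rw [e3] at hT
      -- μ-side bound: Zm (insert y C ∪ M) ≤ Zm (C \ Γ*y) * Zm (Γ*y)
      have hsubset : (insert y C) ∪ M ⊆ (C \ Γstar W y) ∪ Γstar W y := by
        intro t ht
        rcases Finset.mem_union.mp ht with ht1 | ht2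
        · rcases Finset.mem_insert.mp ht1 with rfl | htC
          · exact Finset.mem_union_right _ hyG
          · by_cases htG : t ∈ Γstar W y
            · exact Finset.mem_union_right _ htG
            · exact Finset.mem_union_left _ (Finset.mem_sdiff.mpr ⟨htC, htG⟩)
        · exact Finset.mem_union_right _ (Finset.mem_of_mem_inter_left (hMdef ▸ ht2))
      have hmono : Zpart W ((insert y C) ∪ M) μ ≤
          Zpart W (C \ Γstar W y) μ * Zpart W (Γstar W y) μ :=
        le_trans (Zpart_mono W μ hμ hsubset)
          (Zpart_submul W μ hμ Finset.sdiff_disjoint)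
      have hQe : 0 ≤ Zpart W V (fun t => -p t) := (ihn V hcard').1.le
      have hCG : 0 ≤ Zpart W (C \ Γstar W y) μ := Zpart_nonneg W μ hμ _
      calc p y * Zpart W (Λ \ Γstar W y) (fun t => -p t) * Zpart W (insert y C) μ
          = p y * (Zpart W (insert y C) μ * Zpart W (Λ \ Γstar W y) (fun t => -p t)) := by
            ring
        _ ≤ p y * (Zpart W ((insert y C) ∪ M) μ * Zpart W V (fun t => -p t)) :=
            mul_le_mul_of_nonneg_left hT (hp y)
        _ ≤ p y * ((Zpart W (C \ Γstar W y) μ * Zpart W (Γstar W y) μ) *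
              Zpart W V (fun t => -p t)) :=
            mul_le_mul_of_nonneg_left (mul_le_mul_of_nonneg_right hmono hQe) (hp y)
        _ = (p y * Zpart W (Γstar W y) μ) *
              (Zpart W (C \ Γstar W y) μ * Zpart W V (fun t => -p t)) := by ring
        _ ≤ μ y * (Zpart W (C \ Γstar W y) μ * Zpart W V (fun t => -p t)) :=
            mul_le_mul_of_nonneg_right (hFP y) (mul_nonneg hCG hQe)
        _ = μ y * Zpart W (C \ Γstar W y) μ * Zpart W (Λ.erase y) (fun t => -p t) := by
            rw [hVdef]; ring
    refine ⟨?_, hHYP⟩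
    -- positivity at size n+1
    have hne : Λ.Nonempty := Finset.card_pos.mp (by omega)
    obtain ⟨y, hy⟩ := hne
    have hcard' : (Λ.erase y).card ≤ n := by
      rw [Finset.card_erase_of_mem hy, hcard]; omega
    have hQe : 0 < Zpart W (Λ.erase y) (fun t => -p t) := (ihn _ hcard').1
    have h0 := hHYP y hy ∅ (Finset.disjoint_empty_left Λ)
    have hins : Zpart W (insert y (∅ : Finset P)) μ = 1 + μ y := by
      rw [Zpart_insert W hsym hdiag h01 μ (Finset.notMem_empty y)]
      rw [Zpart_empty, Finset.empty_sdiff, Zpart_empty]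
      ring
    rw [hins] at h0
    rw [Finset.empty_sdiff, Zpart_empty] at h0
    -- h0 : p y * Q (Λ \ Γ*y) * (1 + μ y) ≤ μ y * 1 * Q (Λ.erase y)
    have hQΛ : Zpart W Λ (fun t => -p t)
        = Zpart W (Λ.erase y) (fun t => -p t)
          - p y * Zpart W (Λ \ Γstar W y) (fun t => -p t) := by
      have := Zpart_delete W hsym hdiag h01 (fun t => -p t) hy
      linarith [this]
    have h1 : (0:ℝ) < 1 + μ y := by linarith [hμ y]
    have h2 : Zpart W (Λ.erase y) (fun t => -p t) ≤
        (1 + μ y) * Zpart W Λ (fun t => -p t) := by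
      rw [hQΛ]
      nlinarith [h0, hQe]
    by_contra hneg
    push_neg at hneg
    nlinarith [h2, hQe, mul_nonpos_of_nonneg_of_nonpos h1.le hneg]

end FPmain

theorem fp_free_energy_difference_bound {P : Type*} [Fintype P] [DecidableEq P] (W : P → P → ℕ)
    (hsym : ∀ x y, W x y = W y x) (hdiag : ∀ x, W x x = 0)
    (h01 : ∀ x y, W x y = 0 ∨ W x y = 1)
    (μ p : P → ℝ) (hμ : ∀ x, 0 ≤ μ x) (hp : ∀ x, 0 ≤ p x)
    (hFP : ∀ x, p x * Zpart W (Γstar W x) μ ≤ μ x)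
    (Λ : Finset P) (x : P) (hx : x ∈ Λ) :
    Real.log (Zpart W (Λ.erase x) (fun y => -p y)) - Real.log (Zpart W Λ (fun y => -p y)) ≤
      Real.log (1 + μ x) := by
  have hmain := fp_main W μ p hsym hdiag h01 hμ hp hFP Λ.card
  have hΛ := hmain Λ le_rfl
  have hQΛ : 0 < Zpart W Λ (fun y => -p y) := hΛ.1
  have hcard' : (Λ.erase x).card ≤ Λ.card := Finset.card_le_card (Finset.erase_subset _ _)
  have hQe : 0 < Zpart W (Λ.erase x) (fun y => -p y) := (hmain _ hcard').1
  have h0 := hΛ.2 x hx ∅ (Finset.disjoint_empty_left Λ)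
  have hins : Zpart W (insert x (∅ : Finset P)) μ = 1 + μ x := by
    rw [Zpart_insert W hsym hdiag h01 μ (Finset.notMem_empty x)]
    rw [Zpart_empty, Finset.empty_sdiff, Zpart_empty]
    ring
  rw [hins, Finset.empty_sdiff, Zpart_empty] at h0
  have hQd : Zpart W Λ (fun y => -p y)
      = Zpart W (Λ.erase x) (fun y => -p y)
        - p x * Zpart W (Λ \ Γstar W x) (fun y => -p y) := by
    have := Zpart_delete W hsym hdiag h01 (fun y => -p y) hx
    linarith [this]
  have h1 : (0:ℝ) < 1 + μ x := by linarith [hμ x]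
  have h2 : Zpart W (Λ.erase x) (fun y => -p y) ≤
      (1 + μ x) * Zpart W Λ (fun y => -p y) := by
    rw [hQd]
    nlinarith [h0, hQe]
  have hlog : Real.log (Zpart W (Λ.erase x) (fun y => -p y)) ≤
      Real.log ((1 + μ x) * Zpart W Λ (fun y => -p y)) :=
    Real.log_le_log hQe h2
  rw [Real.log_mul (ne_of_gt h1) (ne_of_gt hQΛ)] at hlog
  linarith
end

section
/- Appendix pressure bound (finite-volume subset gas): let V be a finite set, P_Λ = {x ⊆ Λ : x ≠ ∅} the polymers contained in Λ ⊆ V, with incompatibility W(x,y) = 0 iff x ∩ y ≠ ∅ (in particular every x overlaps itself). Suppose μ : P_V → ℝ≥0 and p : P_V → ℝ≥0 satisfy p_x · Z_{Γ*(x)}(μ) ≤ μ_x for all polymers x, and Σ_{x ∋ v} μ_x ≤ K for every v ∈ V. Then |log Z_{P_Λ}(−p)| ≤ K·|Λ|, i.e., the pressure |log Z_{P_Λ}(−p)|/|Λ| is bounded by K uniformly in Λ. -/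
open Finset

section Aux

variable {V : Type*} [DecidableEq V]

/-- The disjointness incompatibility kernel. -/
abbrev wd : Finset V → Finset V → ℕ := fun x y => if Disjoint x y then 1 else 0

lemma wd_eq_one {x y : Finset V} : wd x y = 1 ↔ Disjoint x y := by
  unfold wd; split <;> simp_all

lemma indep_wd {S : Finset (Finset V)} :
    indepSet wd S ↔ ∀ x ∈ S, ∀ y ∈ S, x ≠ y → Disjoint x y := by
  unfold indepSet; simp only [wd_eq_one]

lemma indep_mono {S T : Finset (Finset V)} (h : S ⊆ T) (hT : indepSet wd T) :
    indepSet wd S := fun x hx y hy hxy => hT x (h hx) y (h hy) hxy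

lemma empty_mem_Z (A : Finset (Finset V)) :
    ∅ ∈ A.powerset.filter (indepSet wd) := by
  simp [indepSet]

lemma Zpart_empty_s15 (a : Finset V → ℝ) : Zpart wd (∅ : Finset (Finset V)) a = 1 := by
  unfold Zpart
  have h : ((∅ : Finset (Finset V)).powerset.filter (indepSet wd)) = {∅} := by
    ext S
    simp only [mem_filter, mem_powerset, subset_empty, mem_singleton]
    constructor
    · exact fun h => h.1
    · rintro rfl
      exact ⟨rfl, fun x hx => absurd hx (notMem_empty x)⟩
  rw [h, sum_singleton, prod_empty]

lemma Zpart_nonneg_s15 {A : Finset (Finset V)} {a : Finset V → ℝ} (ha : ∀ x, 0 ≤ a x) :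
    0 ≤ Zpart wd A a :=
  Finset.sum_nonneg fun S _ => Finset.prod_nonneg fun y _ => ha y

lemma one_le_Zpart_s15 {A : Finset (Finset V)} {a : Finset V → ℝ} (ha : ∀ x, 0 ≤ a x) :
    1 ≤ Zpart wd A a := by
  have := Finset.single_le_sum (f := fun S : Finset (Finset V) => ∏ y ∈ S, a y)
    (fun S _ => Finset.prod_nonneg fun y _ => ha y) (empty_mem_Z A)
  simpa [Zpart] using this

/-- Monotonicity of `Zpart` in the polymer set, for nonnegative weights. -/
lemma Zpart_mono_s15 {A B : Finset (Finset V)} (hAB : A ⊆ B) {a : Finset V → ℝ}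
    (ha : ∀ x, 0 ≤ a x) : Zpart wd A a ≤ Zpart wd B a := by
  apply Finset.sum_le_sum_of_subset_of_nonneg
  · intro S hS
    simp only [mem_filter, mem_powerset] at hS ⊢
    exact ⟨hS.1.trans hAB, hS.2⟩
  · intro S _ _
    exact Finset.prod_nonneg fun y _ => ha y

/-- Deletion identity. -/
lemma Zpart_delete_s15 (A : Finset (Finset V)) (x : Finset V) (hx : x ∈ A) (hne : x.Nonempty)
    (a : Finset V → ℝ) :
    Zpart wd A a = Zpart wd (A.erase x) a
      + a x * Zpart wd ((A.erase x).filter (fun y => Disjoint x y)) a := by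
  have hxx : ¬ Disjoint x x := by
    simpa [disjoint_self] using hne.ne_empty
  unfold Zpart
  rw [← Finset.sum_filter_add_sum_filter_not (A.powerset.filter (indepSet wd))
    (fun S => x ∈ S)]
  rw [add_comm]
  congr 1
  · -- sum over S not containing x
    congr 1
    ext S
    simp only [mem_filter, mem_powerset, subset_erase]
    tauto
  · -- sum over S containing x
    rw [Finset.mul_sum]
    apply Finset.sum_nbij' (fun S => S.erase x) (fun T => insert x T)
    · intro S hS
      simp only [mem_filter, mem_powerset] at hS ⊢
      obtain ⟨⟨hSA, hind⟩, hxS⟩ := hS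
      refine ⟨?_, indep_mono (erase_subset _ _) hind⟩
      intro y hy
      rw [mem_erase] at hy
      simp only [mem_filter, mem_erase]
      refine ⟨⟨hy.1, hSA hy.2⟩, ?_⟩
      exact wd_eq_one.mp (hind x hxS y hy.2 (Ne.symm hy.1))
    · intro T hT
      simp only [mem_filter, mem_powerset] at hT ⊢
      obtain ⟨hTD, hind⟩ := hT
      have hxT : x ∉ T := by
        intro hxT
        have := hTD hxT
        simp only [mem_filter] at this
        exact hxx this.2
      have hTsub : ∀ y ∈ T, y ∈ A.erase x ∧ Disjoint x y := by
        intro y hy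
        have := hTD hy
        simp only [mem_filter] at this
        exact this
      constructor
      · constructor
        · intro y hy
          rcases Finset.mem_insert.mp hy with rfl | hy
          · exact hx
          · exact (Finset.mem_of_mem_erase (hTsub y hy).1)
        · rw [indep_wd]
          intro u hu v hv huv
          rw [Finset.mem_insert] at hu hv
          rcases hu with rfl | hu
          · rcases hv with rfl | hv
            · exact absurd rfl huv
            · exact (hTsub v hv).2
          · rcases hv with rfl | hv
            · exact Disjoint.symm (hTsub u hu).2
            · exact wd_eq_one.mp (hind u hu v hv huv)
      · exact Finset.mem_insert_self x T
    · intro S hS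
      simp only [mem_filter] at hS
      exact Finset.insert_erase hS.2
    · intro T hT
      simp only [mem_filter, mem_powerset] at hT
      have hxT : x ∉ T := by
        intro hxT
        have := hT.1 hxT
        simp only [mem_filter] at this
        exact hxx this.2
      exact Finset.erase_insert hxT
    · intro S hS
      simp only [mem_filter] at hS
      exact (Finset.mul_prod_erase S a hS.2).symm

end Aux

section Aux2

variable {V : Type*} [DecidableEq V]

/-- Supermultiplicativity of `Zpart` under splitting by a predicate, nonneg weights. -/
lemma Zpart_split (A : Finset (Finset V)) (q : Finset V → Prop) [DecidablePred q]
    {μ : Finset V → ℝ} (hμ : ∀ x, 0 ≤ μ x) :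
    Zpart wd A μ ≤ Zpart wd (A.filter q) μ * Zpart wd (A.filter fun y => ¬ q y) μ := by
  classical
  unfold Zpart
  rw [Finset.sum_mul_sum]
  set P := A.powerset.filter (indepSet wd) with hP
  set P1 := (A.filter q).powerset.filter (indepSet wd) with hP1
  set P2 := (A.filter fun y => ¬ q y).powerset.filter (indepSet wd) with hP2
  set e : Finset (Finset V) → Finset (Finset V) × Finset (Finset V) :=
    fun S => (S.filter q, S.filter fun y => ¬ q y) with he
  have hinj : ∀ S ∈ P, ∀ T ∈ P, e S = e T → S = T := by
    intro S _ T _ hST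
    have h1 : S.filter q = T.filter q := congrArg Prod.fst hST
    have h2 : (S.filter fun y => ¬ q y) = T.filter fun y => ¬ q y := congrArg Prod.snd hST
    calc S = S.filter q ∪ S.filter fun y => ¬ q y := (filter_union_filter_not_eq (p := q) S).symm
      _ = T.filter q ∪ T.filter fun y => ¬ q y := by rw [h1, h2]
      _ = T := filter_union_filter_not_eq (p := q) T
  calc ∑ S ∈ P, ∏ y ∈ S, μ y
      = ∑ S ∈ P, (∏ y ∈ S.filter q, μ y) * ∏ y ∈ S.filter (fun y => ¬ q y), μ y := by
        refine Finset.sum_congr rfl fun S _ => ?_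
        exact (Finset.prod_filter_mul_prod_filter_not S q μ).symm
    _ = ∑ pr ∈ P.image e, (∏ y ∈ pr.1, μ y) * ∏ y ∈ pr.2, μ y := by
        rw [Finset.sum_image hinj]
    _ ≤ ∑ pr ∈ P1 ×ˢ P2, (∏ y ∈ pr.1, μ y) * ∏ y ∈ pr.2, μ y := by
        apply Finset.sum_le_sum_of_subset_of_nonneg
        · intro pr hpr
          rw [Finset.mem_image] at hpr
          obtain ⟨S, hS, rfl⟩ := hpr
          rw [hP] at hS
          simp only [mem_filter, mem_powerset] at hS
          rw [Finset.mem_product]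
          constructor
          · rw [hP1]
            simp only [mem_filter, mem_powerset]
            exact ⟨Finset.filter_subset_filter q hS.1,
              indep_mono (Finset.filter_subset _ _) hS.2⟩
          · rw [hP2]
            simp only [mem_filter, mem_powerset]
            exact ⟨Finset.filter_subset_filter _ hS.1,
              indep_mono (Finset.filter_subset _ _) hS.2⟩
        · intro pr _ _
          exact mul_nonneg (Finset.prod_nonneg fun y _ => hμ y)
            (Finset.prod_nonneg fun y _ => hμ y)
    _ = ∑ T1 ∈ P1, ∑ T2 ∈ P2, (∏ y ∈ T1, μ y) * ∏ y ∈ T2, μ y := by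
        rw [Finset.sum_product]

variable [Fintype V]

lemma mem_Γstar {x y : Finset V} : y ∈ Γstar (wd (V := V)) x ↔ ¬ Disjoint x y := by
  unfold Γstar wd
  simp only [mem_filter, mem_univ, true_and]
  split <;> simp_all

/-- `Z_{Γ*(x)}(μ) ≥ 1 + μ x` for a nonempty polymer `x`. -/
lemma one_add_le_Zpart_Γstar {x : Finset V} (hne : x.Nonempty) {μ : Finset V → ℝ}
    (hμ : ∀ y, 0 ≤ μ y) : 1 + μ x ≤ Zpart wd (Γstar (wd (V := V)) x) μ := by
  have hxx : ¬ Disjoint x x := by simpa [disjoint_self] using hne.ne_empty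
  have hxmem : x ∈ Γstar (wd (V := V)) x := mem_Γstar.mpr hxx
  have hsub : ({∅, {x}} : Finset (Finset (Finset V)))
      ⊆ (Γstar (wd (V := V)) x).powerset.filter (indepSet wd) := by
    intro S hS
    rw [Finset.mem_insert, Finset.mem_singleton] at hS
    rcases hS with rfl | rfl
    · exact empty_mem_Z _
    · simp only [mem_filter, mem_powerset]
      constructor
      · simpa using hxmem
      · intro u hu v hv huv
        rw [Finset.mem_singleton] at hu hv
        exact absurd (hu.trans hv.symm) huv
  have hne' : (∅ : Finset (Finset V)) ≠ {x} := by
    intro h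
    exact (Finset.singleton_ne_empty x) h.symm
  have := Finset.sum_le_sum_of_subset_of_nonneg hsub
    (f := fun S : Finset (Finset V) => ∏ y ∈ S, μ y)
    (fun S _ _ => Finset.prod_nonneg fun y _ => hμ y)
  rw [Finset.sum_pair hne'] at this
  simpa [Zpart] using this

/-- Antitonicity of `Z(-p)` given positivity on subsets. -/
lemma Zm_anti {p : Finset V → ℝ} (hp : ∀ x, 0 ≤ p x) :
    ∀ n (C : Finset (Finset V)), C.card ≤ n → (∀ y ∈ C, y.Nonempty) →
    (∀ B : Finset (Finset V), B ⊆ C → 0 < Zpart wd B (fun x => -p x)) →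
    ∀ B ⊆ C, Zpart wd C (fun x => -p x) ≤ Zpart wd B (fun x => -p x) := by
  intro n
  induction n with
  | zero =>
    intro C hcard _ _ B hBC
    have hC : C = ∅ := Finset.card_eq_zero.mp (Nat.le_zero.mp hcard)
    subst hC
    rw [Finset.subset_empty.mp hBC]
  | succ n ih =>
    intro C hcard hCne hpos B hBC
    by_cases hEq : B = C
    · subst hEq; exact le_refl _
    · obtain ⟨x, hxC, hxB⟩ := Finset.exists_of_ssubset (lt_of_le_of_ne hBC hEq)
      have hxne := hCne x hxC
      rw [Zpart_delete_s15 C x hxC hxne]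
      set D := (C.erase x).filter (fun y => Disjoint x y) with hD
      have hDsub : D ⊆ C := (Finset.filter_subset _ _).trans (Finset.erase_subset _ _)
      have hDpos : 0 < Zpart wd D (fun x => -p x) := hpos D hDsub
      have hterm : -p x * Zpart wd D (fun x => -p x) ≤ 0 :=
        mul_nonpos_of_nonpos_of_nonneg (neg_nonpos.mpr (hp x)) (le_of_lt hDpos)
      have hEcard : (C.erase x).card ≤ n := by
        have h1 := Finset.card_erase_of_mem hxC
        omega
      have hEC : C.erase x ⊆ C := Finset.erase_subset _ _
      have h2 : Zpart wd (C.erase x) (fun x => -p x) ≤ Zpart wd B (fun x => -p x) :=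
        ih (C.erase x) hEcard (fun y hy => hCne y (hEC hy))
          (fun B' hB' => hpos B' (hB'.trans hEC))
          B (Finset.subset_erase.mpr ⟨hBC, hxB⟩)
      linarith

end Aux2

section Aux3

variable {V : Type*} [Fintype V] [DecidableEq V]

/-- `Z_T(μ) ≥ 1 + μ x` whenever `x ∈ T`. -/
lemma one_add_le_Zpart_of_mem {x : Finset V} {T : Finset (Finset V)} (hxT : x ∈ T)
    {μ : Finset V → ℝ} (hμ : ∀ y, 0 ≤ μ y) : 1 + μ x ≤ Zpart wd T μ := by
  have hsub : ({∅, {x}} : Finset (Finset (Finset V)))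
      ⊆ T.powerset.filter (indepSet wd) := by
    intro S hS
    rw [Finset.mem_insert, Finset.mem_singleton] at hS
    rcases hS with rfl | rfl
    · exact empty_mem_Z _
    · simp only [mem_filter, mem_powerset]
      constructor
      · simpa using hxT
      · intro u hu v hv huv
        rw [Finset.mem_singleton] at hu hv
        exact absurd (hu.trans hv.symm) huv
  have hne' : (∅ : Finset (Finset V)) ≠ {x} := by
    intro h
    exact (Finset.singleton_ne_empty x) h.symm
  have := Finset.sum_le_sum_of_subset_of_nonneg hsub
    (f := fun S : Finset (Finset V) => ∏ y ∈ S, μ y)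
    (fun S _ _ => Finset.prod_nonneg fun y _ => hμ y)
  rw [Finset.sum_pair hne'] at this
  simpa [Zpart] using this

lemma nd_self {x : Finset V} (hne : x.Nonempty) : ¬ Disjoint x x := by
  simpa [disjoint_self] using hne.ne_empty

lemma mem_Γstar_self {x : Finset V} (hne : x.Nonempty) : x ∈ Γstar (wd (V := V)) x :=
  mem_Γstar.mpr (nd_self hne)

/-- The key Fernández–Procacci style inductive claim. -/
lemma claimC (μ p : Finset V → ℝ) (hμ : ∀ x, 0 ≤ μ x) (hp : ∀ x, 0 ≤ p x)
    (hFP : ∀ x : Finset V, x.Nonempty →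
      p x * Zpart wd (Γstar (wd (V := V)) x) μ ≤ μ x) :
    ∀ n (S : Finset (Finset V)), S.card ≤ n → (∀ y ∈ S, y.Nonempty) →
      (0 < Zpart wd S (fun z => -p z)) ∧
      ∀ x : Finset V, x.Nonempty → x ∉ S →
        p x * (Zpart wd (S.filter fun z => Disjoint x z) (fun z => -p z)
            * Zpart wd (Γstar (wd (V := V)) x \ S) μ)
          ≤ μ x * Zpart wd S (fun z => -p z) := by
  intro n
  induction n with
  | zero =>
    intro S hcard _
    have hS : S = ∅ := Finset.card_eq_zero.mp (Nat.le_zero.mp hcard)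
    subst hS
    rw [Zpart_empty_s15]
    refine ⟨one_pos, ?_⟩
    intro x hxne _
    rw [Finset.filter_empty, Zpart_empty_s15, Finset.sdiff_empty]
    simpa using hFP x hxne
  | succ n ih =>
    intro S hcard hSne
    rcases Finset.eq_empty_or_nonempty S with rfl | ⟨z0, hz0⟩
    · rw [Zpart_empty_s15]
      refine ⟨one_pos, ?_⟩
      intro x hxne _
      rw [Finset.filter_empty, Zpart_empty_s15, Finset.sdiff_empty]
      simpa using hFP x hxne
    -- positivity
    have hpos : 0 < Zpart wd S (fun z => -p z) := by
      set S₁ := S.erase z0 with hS₁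
      have hz0ne : z0.Nonempty := hSne z0 hz0
      have hS₁card : S₁.card ≤ n := by
        rw [hS₁]
        have h1 := Finset.card_erase_of_mem hz0
        have h2 : 1 ≤ S.card := Finset.card_pos.mpr ⟨z0, hz0⟩
        omega
      have hS₁ne : ∀ y ∈ S₁, y.Nonempty := fun y hy => hSne y (Finset.erase_subset _ _ hy)
      obtain ⟨hpos₁, hcl₁⟩ := ih S₁ hS₁card hS₁ne
      have hkey := hcl₁ z0 hz0ne (Finset.notMem_erase _ _)
      have hQpos : 0 < Zpart wd (S₁.filter fun z => Disjoint z0 z) (fun z => -p z) :=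
        (ih _ ((Finset.card_le_card ((Finset.filter_subset _ _))).trans hS₁card)
          (fun y hy => hS₁ne y (Finset.filter_subset _ _ hy))).1
      have hΓ : 1 + μ z0 ≤ Zpart wd (Γstar (wd (V := V)) z0 \ S₁) μ :=
        one_add_le_Zpart_of_mem
          (Finset.mem_sdiff.mpr ⟨mem_Γstar_self hz0ne, Finset.notMem_erase _ _⟩) hμ
      have hdel := Zpart_delete_s15 S z0 hz0 hz0ne (fun z => -p z)
      have h1 : p z0 * ((1 + μ z0) * Zpart wd (S₁.filter fun z => Disjoint z0 z)
          (fun z => -p z)) ≤ μ z0 * Zpart wd S₁ (fun z => -p z) := by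
        calc p z0 * ((1 + μ z0) * Zpart wd (S₁.filter fun z => Disjoint z0 z) (fun z => -p z))
            ≤ p z0 * (Zpart wd (Γstar (wd (V := V)) z0 \ S₁) μ
              * Zpart wd (S₁.filter fun z => Disjoint z0 z) (fun z => -p z)) := by
              apply mul_le_mul_of_nonneg_left _ (hp z0)
              exact mul_le_mul_of_nonneg_right hΓ (le_of_lt hQpos)
          _ ≤ μ z0 * Zpart wd S₁ (fun z => -p z) := by
              have := hkey
              linarith [hkey]
      nlinarith [hpos₁, hμ z0, hQpos, hp z0]
    refine ⟨hpos, ?_⟩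
    intro x hxne hxS
    by_cases hEx : ∃ y ∈ S, ¬ Disjoint x y
    · obtain ⟨y, hyS, hyx⟩ := hEx
      have hyne : y.Nonempty := hSne y hyS
      set S' := S.erase y with hS'def
      have hS'card : S'.card ≤ n := by
        rw [hS'def]
        have h1 := Finset.card_erase_of_mem hyS
        have h2 : 1 ≤ S.card := Finset.card_pos.mpr ⟨y, hyS⟩
        omega
      have hS'sub : S' ⊆ S := Finset.erase_subset _ _
      have hS'ne : ∀ u ∈ S', u.Nonempty := fun u hu => hSne u (hS'sub hu)
      have hxS' : x ∉ S' := fun h => hxS (hS'sub h)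
      obtain ⟨hposS', hcl'⟩ := ih S' hS'card hS'ne
      -- names
      set Qx := S'.filter (fun z => Disjoint x z) with hQx
      set Qy := S'.filter (fun z => Disjoint y z) with hQy
      set X' := Γstar (wd (V := V)) x \ S' with hX'
      set X := Γstar (wd (V := V)) x \ S with hX
      set B := X.filter (fun z => Disjoint y z) with hB
      set C := Γstar (wd (V := V)) y \ S' with hC
      -- (i): S.filter (Disjoint x) = Qx
      have hi : S.filter (fun z => Disjoint x z) = Qx := by
        rw [hQx, hS'def]
        ext u
        simp only [mem_filter, mem_erase]
        constructor
        · rintro ⟨huS, hd⟩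
          exact ⟨⟨fun h => hyx (h ▸ hd), huS⟩, hd⟩
        · rintro ⟨⟨_, huS⟩, hd⟩
          exact ⟨huS, hd⟩
      -- (ii) : deletion for Zm S
      have hii : Zpart wd S (fun z => -p z)
          = Zpart wd S' (fun z => -p z) + -p y * Zpart wd Qy (fun z => -p z) :=
        Zpart_delete_s15 S y hyS hyne _
      -- (iii) : deletion for Zp X'
      have hyX' : y ∈ X' := Finset.mem_sdiff.mpr ⟨mem_Γstar.mpr hyx, Finset.notMem_erase _ _⟩
      have hX'erase : X'.erase y = X := by
        rw [hX', hX, hS'def]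
        ext u
        simp only [Finset.mem_erase, Finset.mem_sdiff, mem_erase]
        constructor
        · rintro ⟨huy, hu, hnS'⟩
          exact ⟨hu, fun huS => hnS' ⟨huy, huS⟩⟩
        · rintro ⟨hu, hnS⟩
          refine ⟨fun h => hnS (h ▸ hyS), hu, fun hus => hnS hus.2⟩
      have hiii : Zpart wd X' μ = Zpart wd X μ + μ y * Zpart wd B μ := by
        have := Zpart_delete_s15 X' y hyX' hyne μ
        rw [hX'erase] at this
        rw [this, hB]
      -- (iv), (v) : induction hypotheses
      have hiv := hcl' x hxne hxS'
      have hv := hcl' y hyne (Finset.notMem_erase _ _)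
      -- (vi) : submultiplicativity Zp X' ≤ Zp B * Zp C
      have hvi : Zpart wd X' μ ≤ Zpart wd B μ * Zpart wd C μ := by
        have hsplit := Zpart_split X' (fun z => Disjoint y z) hμ
        have hfil1 : X'.filter (fun z => Disjoint y z) = B := by
          rw [hB, ← hX'erase]
          ext u
          simp only [mem_filter, Finset.mem_erase]
          constructor
          · rintro ⟨hu, hd⟩
            exact ⟨⟨fun h => (nd_self hyne) (h ▸ hd), hu⟩, hd⟩
          · rintro ⟨⟨_, hu⟩, hd⟩
            exact ⟨hu, hd⟩
        have hfil2 : X'.filter (fun z => ¬ Disjoint y z) ⊆ C := by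
          rw [hC]
          intro u hu
          rw [mem_filter, hX', Finset.mem_sdiff] at hu
          exact Finset.mem_sdiff.mpr ⟨mem_Γstar.mpr hu.2, hu.1.2⟩
        calc Zpart wd X' μ ≤ Zpart wd (X'.filter fun z => Disjoint y z) μ
              * Zpart wd (X'.filter fun z => ¬ Disjoint y z) μ := hsplit
          _ ≤ Zpart wd B μ * Zpart wd C μ := by
              rw [hfil1]
              exact mul_le_mul_of_nonneg_left (Zpart_mono_s15 hfil2 hμ) (Zpart_nonneg_s15 hμ)
      -- auxiliary positivity / bounds
      have hQxpos : 0 < Zpart wd Qx (fun z => -p z) :=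
        (ih Qx ((Finset.card_le_card (hQx ▸ Finset.filter_subset _ _)).trans hS'card)
          (fun u hu => hS'ne u ((hQx ▸ Finset.filter_subset _ _ : Qx ⊆ S') hu))).1
      have hQypos : 0 < Zpart wd Qy (fun z => -p z) :=
        (ih Qy ((Finset.card_le_card (hQy ▸ Finset.filter_subset _ _)).trans hS'card)
          (fun u hu => hS'ne u ((hQy ▸ Finset.filter_subset _ _ : Qy ⊆ S') hu))).1
      have hCbound : 1 + μ y ≤ Zpart wd C μ :=
        one_add_le_Zpart_of_mem
          (Finset.mem_sdiff.mpr ⟨mem_Γstar_self hyne, Finset.notMem_erase _ _⟩) hμ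
      have hCpos : (0:ℝ) < Zpart wd C μ := by
        have := hμ y; linarith
      have hBpos : (0:ℝ) ≤ Zpart wd B μ := Zpart_nonneg_s15 hμ
      have hX'nn : (0:ℝ) ≤ Zpart wd X' μ := Zpart_nonneg_s15 hμ
      -- final algebra
      rw [hi, hii]
      set zc := Zpart wd C μ
      set zb := Zpart wd B μ
      set zx' := Zpart wd X' μ
      set zqx := Zpart wd Qx (fun z => -p z)
      set zqy := Zpart wd Qy (fun z => -p z)
      set zs' := Zpart wd S' (fun z => -p z)
      have hxeq : Zpart wd X μ = zx' - μ y * zb := by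
        rw [hiii]; ring
      rw [hxeq]
      -- goal : p x * (zqx * (zx' - μ y * zb)) ≤ μ x * (zs' + -p y * zqy)
      have f1 : μ x * (p y * (zqy * zc)) ≤ μ x * (μ y * zs') :=
        mul_le_mul_of_nonneg_left hv (hμ x)
      have f2 : μ y * (p x * zqx * zx') ≤ μ y * (p x * zqx * (zb * zc)) := by
        apply mul_le_mul_of_nonneg_left _ (hμ y)
        exact mul_le_mul_of_nonneg_left hvi (mul_nonneg (hp x) (le_of_lt hQxpos))
      have f3 : (zc - μ y) * (μ x * zs' - p x * (zqx * zx')) ≥ 0 := by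
        apply mul_nonneg
        · linarith
        · linarith [hiv]
      rw [← mul_le_mul_iff_right₀ hCpos]
      nlinarith [f1, f2, f3]
    · -- no element of S is incompatible with x
      push_neg at hEx
      have hfil : S.filter (fun z => Disjoint x z) = S :=
        Finset.filter_true_of_mem fun z hz => hEx z hz
      rw [hfil]
      have hmono : Zpart wd (Γstar (wd (V := V)) x \ S) μ
          ≤ Zpart wd (Γstar (wd (V := V)) x) μ :=
        Zpart_mono_s15 (Finset.sdiff_subset) hμ
      calc p x * (Zpart wd S (fun z => -p z) * Zpart wd (Γstar (wd (V := V)) x \ S) μ)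
          ≤ p x * (Zpart wd S (fun z => -p z) * Zpart wd (Γstar (wd (V := V)) x) μ) := by
            apply mul_le_mul_of_nonneg_left _ (hp x)
            exact mul_le_mul_of_nonneg_left hmono (le_of_lt hpos)
        _ = (p x * Zpart wd (Γstar (wd (V := V)) x) μ) * Zpart wd S (fun z => -p z) := by ring
        _ ≤ μ x * Zpart wd S (fun z => -p z) :=
            mul_le_mul_of_nonneg_right (hFP x hxne) (le_of_lt hpos)

end Aux3

section Final

variable {V : Type*} [Fintype V] [DecidableEq V]

theorem subset_gas_pressure_bound' (K : ℝ)
    (μ p : Finset V → ℝ) (hμ : ∀ x, 0 ≤ μ x) (hp : ∀ x, 0 ≤ p x)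
    (hFP : ∀ x : Finset V, x.Nonempty →
      p x * Zpart wd (Γstar (wd (V := V)) x) μ ≤ μ x)
    (hK : ∀ v : V, ∑ x ∈ Finset.univ.filter (fun x : Finset V => v ∈ x), μ x ≤ K)
    (Λ : Finset V) :
    |Real.log (Zpart wd (Λ.powerset.filter Finset.Nonempty) (fun x => -p x))|
      ≤ K * Λ.card := by
  have hC := claimC μ p hμ hp hFP
  have hposAll : ∀ S : Finset (Finset V), (∀ y ∈ S, y.Nonempty) →
      0 < Zpart wd S (fun z => -p z) := fun S hS => (hC S.card S le_rfl hS).1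
  -- ratio lemma
  have hratio : ∀ (S : Finset (Finset V)) (x : Finset V), x.Nonempty → x ∉ S →
      (∀ y ∈ S, y.Nonempty) →
      Zpart wd S (fun z => -p z) ≤ (1 + μ x) * Zpart wd (insert x S) (fun z => -p z) := by
    intro S x hxne hxS hSne
    have hdel := Zpart_delete_s15 (insert x S) x (Finset.mem_insert_self x S) hxne (fun z => -p z)
    rw [Finset.erase_insert hxS] at hdel
    have hkey := (hC S.card S le_rfl hSne).2 x hxne hxS
    have hQpos : 0 < Zpart wd (S.filter fun z => Disjoint x z) (fun z => -p z) :=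
      hposAll _ (fun u hu => hSne u (Finset.filter_subset _ _ hu))
    have hΓ : 1 + μ x ≤ Zpart wd (Γstar (wd (V := V)) x \ S) μ :=
      one_add_le_Zpart_of_mem (Finset.mem_sdiff.mpr ⟨mem_Γstar_self hxne, hxS⟩) hμ
    have h1 : p x * ((1 + μ x) * Zpart wd (S.filter fun z => Disjoint x z) (fun z => -p z))
        ≤ μ x * Zpart wd S (fun z => -p z) := by
      calc p x * ((1 + μ x) * Zpart wd (S.filter fun z => Disjoint x z) (fun z => -p z))
          ≤ p x * (Zpart wd (S.filter fun z => Disjoint x z) (fun z => -p z)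
            * Zpart wd (Γstar (wd (V := V)) x \ S) μ) := by
            apply mul_le_mul_of_nonneg_left _ (hp x)
            nlinarith [hQpos, hΓ]
        _ ≤ μ x * Zpart wd S (fun z => -p z) := hkey
    nlinarith [hμ x, hposAll S hSne, hdel]
  -- lower bound : Zm A * ∏ (1+μ) ≥ 1
  have hlower : ∀ A : Finset (Finset V), (∀ y ∈ A, y.Nonempty) →
      1 ≤ Zpart wd A (fun z => -p z) * ∏ x ∈ A, (1 + μ x) := by
    intro A
    induction A using Finset.induction_on with
    | empty => intro _; rw [Zpart_empty_s15, Finset.prod_empty]; norm_num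
    | insert x B hxB =>
      intro hne
      have hxne : x.Nonempty := hne x (Finset.mem_insert_self x B)
      have hBne : ∀ y ∈ B, y.Nonempty := fun y hy => hne y (Finset.mem_insert_of_mem hy)
      have hIH := (by assumption : (∀ y ∈ B, y.Nonempty) →
        1 ≤ Zpart wd B (fun z => -p z) * ∏ u ∈ B, (1 + μ u)) hBne
      have hr := hratio B x hxne hxB hBne
      have hprodpos : (0:ℝ) ≤ ∏ u ∈ B, (1 + μ u) :=
        Finset.prod_nonneg fun u _ => by linarith [hμ u]
      rw [Finset.prod_insert hxB]
      have := mul_le_mul_of_nonneg_right hr hprodpos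
      calc (1:ℝ) ≤ Zpart wd B (fun z => -p z) * ∏ u ∈ B, (1 + μ u) := hIH
        _ ≤ ((1 + μ x) * Zpart wd (insert x B) (fun z => -p z)) * ∏ u ∈ B, (1 + μ u) := this
        _ = Zpart wd (insert x B) (fun z => -p z) * ((1 + μ x) * ∏ u ∈ B, (1 + μ u)) := by
            ring
  -- the polymer set
  set A := Λ.powerset.filter Finset.Nonempty with hA
  have hAne : ∀ y ∈ A, y.Nonempty := by
    intro y hy; rw [hA, mem_filter] at hy; exact hy.2
  have hApos : 0 < Zpart wd A (fun z => -p z) := hposAll A hAne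
  -- upper bound Zm ≤ 1
  have hupper : Zpart wd A (fun z => -p z) ≤ 1 := by
    have := Zm_anti hp A.card A le_rfl hAne
      (fun B hB => hposAll B (fun y hy => hAne y (hB hy))) ∅ (Finset.empty_subset A)
    rwa [Zpart_empty_s15] at this
  -- sum bound : ∑_{x ∈ A} μ x ≤ K * |Λ|
  have hsum : ∑ x ∈ A, μ x ≤ K * Λ.card := by
    have hswap : ∑ v ∈ Λ, ∑ x ∈ Finset.univ.filter (fun x : Finset V => v ∈ x), μ x
        = ∑ x ∈ (Finset.univ : Finset (Finset V)), (Λ.filter (fun v => v ∈ x)).card • μ x := by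
      simp_rw [Finset.sum_filter]
      rw [Finset.sum_comm]
      congr 1
      ext x
      rw [← Finset.sum_filter, Finset.sum_const]
    have hstep1 : ∑ x ∈ A, μ x
        ≤ ∑ x ∈ (Finset.univ : Finset (Finset V)), (Λ.filter (fun v => v ∈ x)).card • μ x := by
      calc ∑ x ∈ A, μ x ≤ ∑ x ∈ A, (Λ.filter (fun v => v ∈ x)).card • μ x := by
            apply Finset.sum_le_sum
            intro x hx
            have hxne := hAne x hx
            have hxΛ : x ⊆ Λ := by
              rw [hA, mem_filter, mem_powerset] at hx; exact hx.1
            obtain ⟨v, hv⟩ := hxne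
            have hcard : 1 ≤ (Λ.filter (fun v => v ∈ x)).card := by
              apply Finset.card_pos.mpr
              exact ⟨v, Finset.mem_filter.mpr ⟨hxΛ hv, hv⟩⟩
            rw [nsmul_eq_mul]
            nlinarith [hμ x, (Nat.one_le_cast (α := ℝ)).mpr hcard]
        _ ≤ ∑ x ∈ (Finset.univ : Finset (Finset V)), (Λ.filter (fun v => v ∈ x)).card • μ x := by
            apply Finset.sum_le_sum_of_subset_of_nonneg (Finset.subset_univ A)
            intro x _ _
            rw [nsmul_eq_mul]
            exact mul_nonneg (by positivity) (hμ x)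
    have hstep2 : ∑ v ∈ Λ, ∑ x ∈ Finset.univ.filter (fun x : Finset V => v ∈ x), μ x
        ≤ K * Λ.card := by
      calc ∑ v ∈ Λ, ∑ x ∈ Finset.univ.filter (fun x : Finset V => v ∈ x), μ x
          ≤ ∑ _v ∈ Λ, K := Finset.sum_le_sum fun v _ => hK v
        _ = Λ.card • K := Finset.sum_const K
        _ = K * Λ.card := by rw [nsmul_eq_mul]; ring
    calc ∑ x ∈ A, μ x ≤ _ := hstep1
      _ = _ := hswap.symm
      _ ≤ K * Λ.card := hstep2
  -- product bound
  have hprod : ∏ x ∈ A, (1 + μ x) ≤ Real.exp (K * Λ.card) := by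
    calc ∏ x ∈ A, (1 + μ x) ≤ ∏ x ∈ A, Real.exp (μ x) := by
          apply Finset.prod_le_prod
          · intro x _; linarith [hμ x]
          · intro x _
            have := Real.add_one_le_exp (μ x)
            linarith
      _ = Real.exp (∑ x ∈ A, μ x) := (Real.exp_sum A μ).symm
      _ ≤ Real.exp (K * Λ.card) := Real.exp_le_exp.mpr hsum
  -- conclude
  have hZlow : Real.exp (-(K * Λ.card)) ≤ Zpart wd A (fun z => -p z) := by
    have h1 := hlower A hAne
    have hppos : (0:ℝ) < ∏ x ∈ A, (1 + μ x) := by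
      apply Finset.prod_pos; intro x _; linarith [hμ x]
    have h2 : (∏ x ∈ A, (1 + μ x))⁻¹ ≤ Zpart wd A (fun z => -p z) := by
      rw [inv_le_iff_one_le_mul₀ hppos] at *
      · linarith [h1]
    have h3 : Real.exp (-(K * Λ.card)) ≤ (∏ x ∈ A, (1 + μ x))⁻¹ := by
      rw [Real.exp_neg]
      exact inv_anti₀ hppos hprod
    linarith
  have hlog1 : Real.log (Zpart wd A (fun z => -p z)) ≤ 0 :=
    Real.log_nonpos (le_of_lt hApos) hupper
  have hlog2 : -(K * Λ.card) ≤ Real.log (Zpart wd A (fun z => -p z)) := by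
    rw [← Real.log_exp (-(K * Λ.card))]
    exact Real.log_le_log (Real.exp_pos _) hZlow
  rw [abs_le]
  constructor <;> linarith

end Final

theorem subset_gas_pressure_bound {V : Type*} [Fintype V] [DecidableEq V] (K : ℝ)
    (μ p : Finset V → ℝ) (hμ : ∀ x, 0 ≤ μ x) (hp : ∀ x, 0 ≤ p x)
    (hFP : ∀ x : Finset V, x.Nonempty →
      p x * Zpart (fun x y => if Disjoint x y then 1 else 0)
          (Γstar (fun x y => if Disjoint x y then 1 else 0) x) μ ≤ μ x)
    (hK : ∀ v : V, ∑ x ∈ Finset.univ.filter (fun x : Finset V => v ∈ x), μ x ≤ K)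
    (Λ : Finset V) :
    |Real.log (Zpart (fun x y => if Disjoint x y then 1 else 0)
        (Λ.powerset.filter Finset.Nonempty) (fun x => -p x))| ≤ K * Λ.card := by
  exact subset_gas_pressure_bound' K μ p hμ hp hFP hK Λ
end
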